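/- Suppose Assumption (A) holds and let δ > 0, α ∈ [0,1). Then there exists R > 0 such that, with Q and V defined using this R, the Lyapunov dissipation inequality ∇V(x)·F(x) < 0 holds for all x ∈ ℝ² \ {0}, where F(x1,x2) := (b(g(x2)−1) + D*·g(x2)(1−e^{x1}), p(x2)(D(x1,x2) − D*·g(x2)·e^{x1})) is the closed-loop vector field. -/

import Mathlib

set_option maxHeartbeats 1000000


/-- Under Assumption (A), there exists R > 0 such that the Lyapunov
dissipation inequality ∇V(x)·F(x) < 0 holds for all x ≠ 0. -/
theorem stmt_4
    (S_in Sstar p0 b Dstar : ℝ) (μ : ℝ → ℝ)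
    (hSin : 0 < S_in) (hSstar : Sstar ∈ Set.Ioo 0 S_in)
    (hp0 : 0 < p0) (hb : 0 ≤ b) (hDstar : 0 < Dstar)
    (hμ_bdd : BddAbove (Set.range μ))
    (hμ_C1 : ContDiffOn ℝ 1 μ (Set.Ici 0))
    (hμ_nonneg : ∀ S, 0 ≤ S → 0 ≤ μ S)
    (hμ_zero : μ 0 = 0) (hμ_pos : ∀ S, 0 < S → 0 < μ S)
    (heq : p0 * μ Sstar = b + Dstar)
    (κ : ℝ) (hκ : κ = (S_in - Sstar) / Sstar)
    (p g : ℝ → ℝ)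
    (hp : ∀ z, p z = κ * Real.exp (-z) + 1)
    (hg : ∀ z, g z = μ (S_in / p z) / μ Sstar)
    -- Assumption (A)
    (hA : ∀ S ∈ Set.Icc Sstar S_in, b < p0 * μ S)
    (δ α : ℝ) (hδ : 0 < δ) (hα : α ∈ Set.Ico (0 : ℝ) 1)
    -- feedback law
    (D : ℝ × ℝ → ℝ)
    (hD : ∀ x : ℝ × ℝ, D x =
      (κ + 1) * Dstar * g x.2 * Real.exp (x.1 - x.2) / p x.2 +
        (if x.2 ≤ 0 then δ * b * |g x.2 - 1| ^ (1 + α) else 0))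
    -- closed-loop vector field
    (F : ℝ × ℝ → ℝ × ℝ)
    (hF : ∀ x : ℝ × ℝ, F x =
      (b * (g x.2 - 1) + Dstar * g x.2 * (1 - Real.exp x.1),
       p x.2 * (D x - Dstar * g x.2 * Real.exp x.1))) :
    ∃ R > (0 : ℝ), ∀ Q : ℝ → ℝ,
      (∀ z, Q z = if z ≤ 0 then
          (1/2) * z^2 + (b / (2 * Dstar * δ)) *
            ∫ s in z..(0:ℝ), |g s - 1| ^ (1 - α) / (p s * g s)
        else
          R * ∫ s in (0:ℝ)..z, (Real.exp s / (g s)^2) * (Real.exp s - 1)) →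
      ∀ V : ℝ × ℝ → ℝ,
        (∀ x : ℝ × ℝ, V x = Real.exp x.1 - x.1 - 1 + Q x.2) →
        ∀ x : ℝ × ℝ, x ≠ 0 → fderiv ℝ V x (F x) < 0 := by
  obtain ⟨hS0, hSlt⟩ := hSstar
  obtain ⟨hα0, hα1⟩ := hα
  have hμS : 0 < μ Sstar := hμ_pos _ hS0
  have hκpos : 0 < κ := by rw [hκ]; exact div_pos (by linarith) hS0
  have hSkap : Sstar * (κ + 1) = S_in := by rw [hκ]; field_simp; ring
  -- positivity of p
  have hppos : ∀ z, 0 < p z := fun z => by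
    rw [hp]; positivity
  have hpgt1 : ∀ z, 1 < p z := fun z => by
    rw [hp]; nlinarith [Real.exp_pos (-z), hκpos]
  -- S values
  have hSzpos : ∀ z, 0 < S_in / p z := fun z => div_pos hSin (hppos z)
  have hgpos : ∀ z, 0 < g z := fun z => by
    rw [hg]; exact div_pos (hμ_pos _ (hSzpos z)) hμS
  have hSmem : ∀ z, 0 ≤ z → S_in / p z ∈ Set.Icc Sstar S_in := by
    intro z hz
    constructor
    · rw [le_div_iff₀ (hppos z)]
      have h1 : Real.exp (-z) ≤ 1 := Real.exp_le_one_iff.2 (by linarith)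
      have := hp z
      nlinarith [hS0]
    · exact le_of_lt (by
        rw [div_lt_iff₀ (hppos z)]
        nlinarith [hpgt1 z, hSin])
  -- continuity
  have hμcont : ∀ {S : ℝ}, 0 < S → ContinuousAt μ S := fun {S} h =>
    hμ_C1.continuousOn.continuousAt (Ici_mem_nhds h)
  have hpc : Continuous p := by
    rw [show p = fun z => κ * Real.exp (-z) + 1 from funext hp]
    continuity
  have hSzc : Continuous (fun z => S_in / p z) :=
    continuous_const.div hpc (fun z => (hppos z).ne')
  have hgc : Continuous g := by
    rw [show g = fun z => μ (S_in / p z) / μ Sstar from funext hg]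
    refine Continuous.div_const ?_ _
    refine continuous_iff_continuousAt.2 fun z => ?_
    exact ContinuousAt.comp (g := μ) (f := fun z => S_in / p z) (x := z)
      (hμcont (hSzpos z)) hSzc.continuousAt
  have hg0 : g 0 = 1 := by
    have hp0' : p 0 = κ + 1 := by rw [hp]; simp
    have hS0' : S_in / p 0 = Sstar := by
      rw [hp0', div_eq_iff (by positivity : (κ:ℝ) + 1 ≠ 0)]
      linarith [hSkap]
    rw [hg, hS0', div_self hμS.ne']
  -- Lipschitz constant for μ on [Sstar, S_in]
  have hIccsub : Set.Icc Sstar S_in ⊆ Set.Ioi (0:ℝ) := fun y hy => lt_of_lt_of_le hS0 hy.1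
  have hdiffμ : ∀ y ∈ Set.Icc Sstar S_in, DifferentiableAt ℝ μ y := fun y hy =>
    (hμ_C1.contDiffAt (Ici_mem_nhds (hIccsub hy))).differentiableAt one_ne_zero
  have hderc : ContinuousOn (deriv μ) (Set.Icc Sstar S_in) := by
    have h1 : ContDiffOn ℝ 1 μ (Set.Ioi 0) := hμ_C1.mono Set.Ioi_subset_Ici_self
    exact (h1.continuousOn_deriv_of_isOpen isOpen_Ioi le_rfl).mono hIccsub
  obtain ⟨L0, hL0⟩ := isCompact_Icc.exists_bound_of_continuousOn hderc
  set L := max L0 0 with hLdef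
  have hLnn : 0 ≤ L := le_max_right _ _
  have hlip : ∀ y ∈ Set.Icc Sstar S_in, ∀ y' ∈ Set.Icc Sstar S_in,
      |μ y - μ y'| ≤ L * |y - y'| := by
    intro y hy y' hy'
    have := Convex.norm_image_sub_le_of_norm_deriv_le (C := L) hdiffμ
      (fun x hx => le_trans (hL0 x hx) (le_max_left L0 0)) (convex_Icc _ _) hy' hy
    simpa [Real.norm_eq_abs] using this
  -- max of μ and min of p0 μ - b on [Sstar, S_in]
  have hIccne : (Set.Icc Sstar S_in).Nonempty := ⟨Sstar, le_refl _, le_of_lt hSlt⟩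
  have hμcont' : ContinuousOn μ (Set.Icc Sstar S_in) :=
    hμ_C1.continuousOn.mono (fun y hy => Set.mem_Ici.2 (le_of_lt (hIccsub hy)))
  obtain ⟨SM, hSMmem, hSM⟩ := isCompact_Icc.exists_isMaxOn hIccne hμcont'
  set M := μ SM with hMdef
  have hM : ∀ y ∈ Set.Icc Sstar S_in, μ y ≤ M := hSM
  have hMS : μ Sstar ≤ M := hM _ ⟨le_refl _, le_of_lt hSlt⟩
  have hMpos : 0 < M := lt_of_lt_of_le hμS hMS
  obtain ⟨Sm, hSmmem, hSm⟩ := isCompact_Icc.exists_isMinOn hIccne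
    ((continuousOn_const.mul hμcont').sub continuousOn_const)
  set m2 := p0 * μ Sm - b with hm2def
  have hm2pos : 0 < m2 := sub_pos.2 (hA _ hSmmem)
  have hm2 : ∀ y ∈ Set.Icc Sstar S_in, m2 ≤ p0 * μ y - b := hSm
  -- constants
  set gp := M / μ Sstar with hgpdef
  have hgppos : 0 < gp := div_pos hMpos hμS
  set w₀ := min 1 (m2 / (Dstar * gp)) with hw₀def
  have hw₀pos : 0 < w₀ := lt_min one_pos (div_pos hm2pos (by positivity))
  set C2 := b * L * S_in * κ / μ Sstar with hC2def
  have hC2nn : 0 ≤ C2 := by positivity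
  set R := C2^2 / (4 * Dstar^2 * w₀) + 1 with hRdef
  have hRpos : 0 < R := by positivity
  -- bound on g for z ≥ 0
  have hgle : ∀ z, 0 ≤ z → g z ≤ gp := by
    intro z hz
    rw [hg, hgpdef, div_le_div_iff_of_pos_right hμS]
    exact hM _ (hSmem z hz)
  refine ⟨R, hRpos, ?_⟩
  intro Q hQ V hV x hx
  -- local functions
  set c := b / (2 * Dstar * δ) with hcdef
  have hcnn : 0 ≤ c := by positivity
  set f : ℝ → ℝ := fun s => |g s - 1| ^ (1 - α) / (p s * g s) with hfdef
  set ι : ℝ → ℝ := fun s => (Real.exp s / (g s)^2) * (Real.exp s - 1) with hιdef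
  have hfc : Continuous f := by
    refine Continuous.div ?_ (hpc.mul hgc) (fun s => (mul_pos (hppos s) (hgpos s)).ne')
    exact (hgc.sub continuous_const).abs.rpow_const (fun s => Or.inr (by linarith))
  have hιc : Continuous ι := by
    refine Continuous.mul (Continuous.div Real.continuous_exp (hgc.pow 2)
      (fun s => pow_ne_zero 2 (hgpos s).ne')) (Real.continuous_exp.sub continuous_const)
  have hf0 : f 0 = 0 := by
    rw [hfdef]; simp only [hg0, sub_self, abs_zero]
    rw [Real.zero_rpow (by linarith : (1:ℝ) - α ≠ 0), zero_div]
  have hι0 : ι 0 = 0 := by rw [hιdef]; simp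
  -- the two branch functions
  set Qm : ℝ → ℝ := fun z => (1/2) * z^2 + c * ∫ s in z..(0:ℝ), f s with hQmdef
  set Qp : ℝ → ℝ := fun z => R * ∫ s in (0:ℝ)..z, ι s with hQpdef
  have hQeqm : Set.EqOn Q Qm (Set.Iic 0) := fun z hz => by
    rw [hQ z, if_pos (show z ≤ 0 from hz)]
  have hQeqp : Set.EqOn Q Qp (Set.Ici 0) := by
    intro z hz
    rcases eq_or_lt_of_le (Set.mem_Ici.1 hz : (0:ℝ) ≤ z) with h | h
    · rw [← h, hQ 0, if_pos le_rfl]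
      simp [hQpdef]
    · rw [hQ z, if_neg (not_le.2 h)]
  have hQmd : ∀ z, HasDerivAt Qm (z - c * f z) z := by
    intro z
    have h1 : HasDerivAt (fun u => ∫ s in (0:ℝ)..u, f s) (f z) z :=
      intervalIntegral.integral_hasDerivAt_right (hfc.intervalIntegrable _ _)
        (hfc.stronglyMeasurableAtFilter _ _) hfc.continuousAt
    have h2 : HasDerivAt (fun u => ∫ s in u..(0:ℝ), f s) (-(f z)) z := by
      have he : (fun u => ∫ s in u..(0:ℝ), f s) = fun u => -∫ s in (0:ℝ)..u, f s :=
        funext fun u => (intervalIntegral.integral_symm _ _)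
      rw [he]; exact h1.neg
    have h3 : HasDerivAt (fun u : ℝ => (1/2) * u^2) z z := by
      have := (hasDerivAt_pow 2 z).const_mul (1/2 : ℝ)
      exact this.congr_deriv (by ring)
    have := h3.add (h2.const_mul c)
    exact this.congr_deriv (by ring)
  have hQpd : ∀ z, HasDerivAt Qp (R * ι z) z := by
    intro z
    have h1 : HasDerivAt (fun u => ∫ s in (0:ℝ)..u, ι s) (ι z) z :=
      intervalIntegral.integral_hasDerivAt_right (hιc.intervalIntegrable _ _)
        (hιc.stronglyMeasurableAtFilter _ _) hιc.continuousAt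
    exact h1.const_mul R
  -- derivative of Q
  set q' : ℝ → ℝ := fun z => if z ≤ 0 then z - c * f z else R * ι z with hq'def
  have hQd : ∀ z, HasDerivAt Q (q' z) z := by
    intro z
    rcases lt_trichotomy z 0 with h | h | h
    · have heq' : Q =ᶠ[nhds z] Qm :=
        Filter.eventuallyEq_of_mem (Iio_mem_nhds h) (fun u hu => hQeqm (show u ≤ 0 from le_of_lt hu))
      have := (hQmd z).congr_of_eventuallyEq heq'
      simpa [hq'def, if_pos h.le] using this
    · subst h
      have hL : HasDerivWithinAt Q 0 (Set.Iic 0) 0 := by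
        have h0 : (0:ℝ) - c * f 0 = 0 := by rw [hf0]; ring
        have := ((hQmd 0).hasDerivWithinAt (s := Set.Iic 0))
        rw [h0] at this
        exact this.congr hQeqm (hQeqm (show (0:ℝ) ≤ 0 from le_refl 0))
      have hR' : HasDerivWithinAt Q 0 (Set.Ici 0) 0 := by
        have h0 : R * ι 0 = 0 := by rw [hι0]; ring
        have := ((hQpd 0).hasDerivWithinAt (s := Set.Ici 0))
        rw [h0] at this
        exact this.congr hQeqp (hQeqp (show (0:ℝ) ≤ 0 from le_refl 0))
      have := hL.union hR'
      rw [Set.Iic_union_Ici] at this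
      have h2 := this.hasDerivAt (by simp)
      have h3 : q' 0 = 0 := by rw [hq'def]; simp [hf0]
      rw [h3]; exact h2
    · have heq' : Q =ᶠ[nhds z] Qp :=
        Filter.eventuallyEq_of_mem (Ioi_mem_nhds h) (fun u hu => hQeqp (show 0 ≤ u from le_of_lt hu))
      have := (hQpd z).congr_of_eventuallyEq heq'
      simpa [hq'def, if_neg (not_le.2 h)] using this
  -- fderiv of V
  have hVd : HasFDerivAt V ((Real.exp x.1 - 1) • ContinuousLinearMap.fst ℝ ℝ ℝ
      + q' x.2 • ContinuousLinearMap.snd ℝ ℝ ℝ) x := by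
    have h1 : HasDerivAt (fun t : ℝ => Real.exp t - t - 1) (Real.exp x.1 - 1) x.1 := by
      simpa using ((Real.hasDerivAt_exp x.1).sub (hasDerivAt_id x.1)).sub_const 1
    have h2 := h1.comp_hasFDerivAt x (hasFDerivAt_fst (𝕜 := ℝ) (E := ℝ) (F := ℝ) (p := x))
    have h3 := (hQd x.2).comp_hasFDerivAt x (hasFDerivAt_snd (𝕜 := ℝ) (E := ℝ) (F := ℝ) (p := x))
    have h4 := h2.add h3
    have hVe : V = fun y : ℝ × ℝ =>
        ((fun t : ℝ => Real.exp t - t - 1) ∘ Prod.fst) y + (Q ∘ Prod.snd) y := by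
      funext y; rw [hV y]; simp [Function.comp]
    rw [hVe]; exact h4
  have hfder : fderiv ℝ V x (F x) =
      (Real.exp x.1 - 1) * (F x).1 + q' x.2 * (F x).2 := by
    rw [hVd.fderiv]
    simp [ContinuousLinearMap.add_apply, ContinuousLinearMap.smul_apply, smul_eq_mul]
  -- components of F
  have hF1 : (F x).1 = b * (g x.2 - 1) + Dstar * g x.2 * (1 - Real.exp x.1) := by
    rw [hF]
  have hF2 : (F x).2 = Dstar * g x.2 * Real.exp x.1 * (Real.exp (-x.2) - 1)
      + (if x.2 ≤ 0 then p x.2 * (δ * b * |g x.2 - 1| ^ (1 + α)) else 0) := by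
    rw [hF]
    simp only
    rw [hD]
    have hpne : p x.2 ≠ 0 := (hppos x.2).ne'
    have he : Real.exp (x.1 - x.2) = Real.exp x.1 * Real.exp (-x.2) := by
      rw [← Real.exp_add, sub_eq_add_neg]
    have hp2 : p x.2 = κ * Real.exp (-x.2) + 1 := hp _
    have hden : (0:ℝ) < κ * Real.exp (-x.2) + 1 := by
      have := Real.exp_pos (-x.2); nlinarith only [this, hκpos]
    rw [hp2, he]
    split_ifs with h
    · field_simp [hden.ne']
      ring
    · field_simp [hden.ne']
      ring
  rw [hfder, hF1, hF2]
  -- case analysis on x.2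
  set G := g x.2 with hGdef
  have hG : 0 < G := hgpos x.2
  have hE1 : 0 < Real.exp x.1 := Real.exp_pos _
  rcases lt_trichotomy x.2 0 with h2 | h2 | h2
  · -- x.2 < 0
    have hq'v : q' x.2 = x.2 - c * f x.2 := by rw [hq'def]; simp [h2.le]
    rw [hq'v, if_pos h2.le]
    set E1 := Real.exp x.1 with hE1def
    set E2i := Real.exp (-x.2) with hE2idef
    have hE2i : 1 < E2i := Real.one_lt_exp_iff.2 (by linarith)
    set P := p x.2 with hPdef
    have hP : 0 < P := hppos x.2
    set Ψ := |G - 1| ^ (1 - α) with hΨdef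
    set Φ := |G - 1| ^ (1 + α) with hΦdef
    have hΨnn : 0 ≤ Ψ := Real.rpow_nonneg (abs_nonneg _) _
    have hΦnn : 0 ≤ Φ := Real.rpow_nonneg (abs_nonneg _) _
    have hΨΦ : Ψ * Φ = (G - 1)^2 := by
      rw [hΨdef, hΦdef, ← Real.rpow_add' (abs_nonneg _) (by norm_num)]
      rw [show (1 - α) + (1 + α) = (2:ℝ) by ring]
      rw [show ((2:ℝ) : ℝ) = ((2:ℕ) : ℝ) by norm_num, Real.rpow_natCast, sq_abs]
    have hfx : f x.2 = Ψ / (P * G) := rfl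
    rw [hfx]
    set cf := c * (Ψ / (P * G)) with hcfdef
    have hcfnn : 0 ≤ cf := by positivity
    set A := Dstar * G * E1 * (E2i - 1) with hAdef
    have hApos : 0 < A := by
      have : 0 < E2i - 1 := by linarith
      positivity
    set Bt := P * (δ * b * Φ) with hBtdef
    have hBtnn : 0 ≤ Bt := by positivity
    have h4 : cf * Bt = (b^2 / (2 * Dstar * G)) * (G - 1)^2 := by
      rw [← hΨΦ, hcfdef, hBtdef, hcdef]
      field_simp
    have h1 : (E1 - 1) * (b * (G - 1)) - Dstar * G * (E1 - 1)^2
        ≤ (b^2 / (2 * Dstar * G)) * (G - 1)^2 := by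
      rw [div_mul_eq_mul_div, le_div_iff₀ (by positivity)]
      nlinarith only [sq_nonneg (Dstar * G * (E1 - 1) - b * (G - 1)),
        sq_nonneg (Dstar * G * (E1 - 1))]
    have hexpand : (E1 - 1) * (b * (G - 1) + Dstar * G * (1 - E1)) + (x.2 - cf) * (A + Bt)
        = ((E1 - 1) * (b * (G - 1)) - Dstar * G * (E1 - 1)^2)
          + x.2 * A + x.2 * Bt - cf * A - cf * Bt := by ring
    rw [hexpand, h4]
    have hx2A : x.2 * A < 0 := mul_neg_of_neg_of_pos h2 hApos
    have hx2Bt : x.2 * Bt ≤ 0 := mul_nonpos_of_nonpos_of_nonneg h2.le hBtnn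
    have hcfA : 0 ≤ cf * A := mul_nonneg hcfnn hApos.le
    linarith only [h1, hx2A, hx2Bt, hcfA]
  · -- x.2 = 0
    have hq'v : q' x.2 = 0 := by
      rw [hq'def]; simp [h2, hf0]
    have hx1 : x.1 ≠ 0 := by
      intro h1
      apply hx
      have : x = (x.1, x.2) := rfl
      rw [this, h1, h2]; rfl
    have hE1ne : Real.exp x.1 ≠ 1 := by
      rw [Ne, Real.exp_eq_one_iff]; exact hx1
    rw [hq'v, hGdef, h2, hg0]
    have : (Real.exp x.1 - 1) * (b * (1 - 1) + Dstar * 1 * (1 - Real.exp x.1))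
        = -(Dstar * (Real.exp x.1 - 1)^2) := by ring
    rw [zero_mul, add_zero, this]
    have hsq : 0 < (Real.exp x.1 - 1)^2 := by
      have : Real.exp x.1 - 1 ≠ 0 := fun h => hE1ne (by linarith)
      positivity
    linarith only [mul_pos hDstar hsq]
  · -- x.2 > 0
    have hq'v : q' x.2 = R * ι x.2 := by rw [hq'def]; simp [not_le.2 h2]
    rw [hq'v, if_neg (not_le.2 h2), add_zero]
    set E1 := Real.exp x.1 with hE1def
    set E2 := Real.exp x.2 with hE2def
    have hE2gt : 1 < E2 := Real.one_lt_exp_iff.2 h2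
    have hE2iE2 : Real.exp (-x.2) * E2 = 1 := by
      rw [hE2def, ← Real.exp_add]; simp
    have hιx : ι x.2 = (E2 / G^2) * (E2 - 1) := rfl
    rw [hιx]
    have hE2ine : Real.exp (-x.2) = 1 / E2 := by
      rw [eq_div_iff (by positivity : E2 ≠ 0)]
      exact hE2iE2
    rw [hE2ine]
    have hsimp : R * ((E2 / G^2) * (E2 - 1)) * (Dstar * G * E1 * (1 / E2 - 1))
        = -(R * Dstar * E1 * (E2 - 1)^2 / G) := by
      have hE2ne : E2 ≠ 0 := by positivity
      field_simp
      ring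
    rw [hsimp]
    -- set up per-point quantities
    set Szv := S_in / p x.2 with hSzvdef
    have hmem : Szv ∈ Set.Icc Sstar S_in := hSmem _ h2.le
    set ρ := p0 * μ Szv - b with hρdef
    have hGbD : G * (b + Dstar) = p0 * μ Szv := by
      rw [hGdef, hg, ← heq, ← hSzvdef]
      field_simp
    have hbG : b * (G - 1) = ρ - Dstar * G := by
      rw [hρdef]; linear_combination hGbD
    have hρm : m2 ≤ ρ := hm2 _ hmem
    have hGgp : G ≤ gp := hgle _ h2.le
    -- Lipschitz bound: b * |G - 1| ≤ C2 * (E2 - 1)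
    have hE2ipos : 0 < Real.exp (-x.2) := Real.exp_pos _
    have hkey : Szv ≤ Sstar + S_in * κ * (E2 - 1) := by
      rw [hSzvdef, div_le_iff₀ (hppos x.2), hp x.2]
      have e0 : 0 ≤ Real.exp (-x.2) * (E2 - 1)^2 :=
        mul_nonneg hE2ipos.le (sq_nonneg (E2 - 1))
      have e3 : (Real.exp (-x.2) * E2 - 1) * (E2 - 1) = 0 := by rw [hE2iE2]; ring
      have e1 : 1 - Real.exp (-x.2) ≤ E2 - 1 := by nlinarith only [e0, e3, hE2iE2]
      have f1 := mul_le_mul_of_nonneg_left e1 (mul_nonneg hS0.le hκpos.le)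
      have f2 := mul_le_mul_of_nonneg_right (le_of_lt hSlt)
        (mul_nonneg hκpos.le (by linarith : (0:ℝ) ≤ E2 - 1))
      have f3 : 0 ≤ S_in * κ * (E2 - 1) * (κ * Real.exp (-x.2)) :=
        mul_nonneg (mul_nonneg (mul_nonneg hSin.le hκpos.le)
          (by linarith : (0:ℝ) ≤ E2 - 1)) (mul_nonneg hκpos.le hE2ipos.le)
      nlinarith only [f1, f2, f3, hSkap]
    have habs2 : |Szv - Sstar| ≤ S_in * κ * (E2 - 1) := by
      rw [abs_of_nonneg (by linarith [hmem.1])]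
      linarith
    have hlipv : |μ Szv - μ Sstar| ≤ L * |Szv - Sstar| :=
      hlip _ hmem _ ⟨le_refl _, le_of_lt hSlt⟩
    have hGd : |G - 1| * μ Sstar = |μ Szv - μ Sstar| := by
      rw [hGdef, hg, ← hSzvdef]
      rw [show μ Szv / μ Sstar - 1 = (μ Szv - μ Sstar) / μ Sstar by field_simp]
      rw [abs_div, abs_of_pos hμS, div_mul_cancel₀ _ hμS.ne']
    have hbabs : b * |G - 1| ≤ C2 * (E2 - 1) := by
      rw [hC2def, div_mul_eq_mul_div, le_div_iff₀ hμS]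
      have h5 : b * |μ Szv - μ Sstar| ≤ b * (L * (S_in * κ * (E2 - 1))) := by
        apply mul_le_mul_of_nonneg_left _ hb
        calc |μ Szv - μ Sstar| ≤ L * |Szv - Sstar| := hlipv
          _ ≤ L * (S_in * κ * (E2 - 1)) := mul_le_mul_of_nonneg_left habs2 hLnn
      calc b * |G - 1| * μ Sstar = b * (|G - 1| * μ Sstar) := by ring
        _ = b * |μ Szv - μ Sstar| := by rw [hGd]
        _ ≤ b * (L * (S_in * κ * (E2 - 1))) := h5
        _ = b * L * S_in * κ * (E2 - 1) := by ring
    have hT1 : (E1 - 1) * (b * (G - 1) + Dstar * G * (1 - E1))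
        = (E1 - 1) * (ρ - Dstar * G * E1) := by
      linear_combination (E1 - 1) * hbG
    rw [hT1]
    have hT2pos : 0 < R * Dstar * E1 * (E2 - 1)^2 / G := by
      have : 0 < E2 - 1 := by linarith
      positivity
    rcases lt_or_ge E1 w₀ with hw | hw
    · -- E1 < w₀ : first factor negative, second positive
      have hw1 : E1 < 1 := lt_of_lt_of_le hw (min_le_left _ _)
      have hwm : E1 < m2 / (Dstar * gp) := lt_of_lt_of_le hw (min_le_right _ _)
      have hDGE : Dstar * G * E1 < m2 := by
        have h6 : Dstar * gp * E1 < m2 := by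
          rw [lt_div_iff₀ (by positivity)] at hwm
          linarith only [hwm]
        have h7 := mul_le_mul_of_nonneg_right
          (mul_le_mul_of_nonneg_left hGgp hDstar.le) hE1.le
        linarith only [h6, h7]
      have h9 : (E1 - 1) * (ρ - Dstar * G * E1) < 0 :=
        mul_neg_of_neg_of_pos (by linarith only [hw1])
          (by linarith only [hρm, hDGE])
      exact add_neg_of_neg_of_nonpos h9 (neg_nonpos.2 hT2pos.le)
    · -- w₀ ≤ E1
      have hA1 : (E1 - 1) * (ρ - Dstar * G * E1) ≤ (ρ - Dstar * G)^2 / (4 * Dstar * G) := by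
        rw [le_div_iff₀ (by positivity)]
        nlinarith only [sq_nonneg (2 * Dstar * G * E1 - ρ - Dstar * G)]
      have hA2 : (ρ - Dstar * G)^2 ≤ C2^2 * (E2 - 1)^2 := by
        rw [← hbG]
        have h7 := mul_self_le_mul_self (mul_nonneg hb (abs_nonneg (G - 1))) hbabs
        have h8 : b^2 * |G - 1|^2 = b^2 * (G - 1)^2 := by rw [sq_abs]
        nlinarith only [h7, h8]
      have hA3 : (ρ - Dstar * G)^2 / (4 * Dstar * G) ≤ C2^2 * (E2 - 1)^2 / (4 * Dstar * G) :=
        (div_le_div_iff_of_pos_right (by positivity)).2 hA2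
      have hA4 : C2^2 * (E2 - 1)^2 / (4 * Dstar * G) < R * Dstar * E1 * (E2 - 1)^2 / G := by
        rw [div_lt_div_iff₀ (by positivity) hG]
        have h8 : R * (4 * Dstar^2 * w₀) = C2^2 + 4 * Dstar^2 * w₀ := by
          rw [hRdef]; field_simp
        have hRw : C2^2 < 4 * R * Dstar^2 * E1 := by
          have hm := mul_le_mul_of_nonneg_left hw (by positivity : (0:ℝ) ≤ 4 * R * Dstar^2)
          have hp4 : 0 < 4 * Dstar^2 * w₀ := by positivity
          linarith only [h8, hm, hp4]
        have hE2sq : 0 < (E2 - 1)^2 := by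
          have : 0 < E2 - 1 := by linarith
          positivity
        have h10 := mul_lt_mul_of_pos_right hRw (mul_pos hE2sq hG)
        nlinarith only [h10]
      have hlt : (E1 - 1) * (ρ - Dstar * G * E1) < R * Dstar * E1 * (E2 - 1)^2 / G :=
        lt_of_le_of_lt (hA1.trans hA3) hA4
      rw [← sub_eq_add_neg]
      exact sub_neg.mpr hlt
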